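/- Let M be the set of fixed-point-free involutions in the symmetric group on the set {1, 2, 3, 4, 5, 6} (M has exactly 15 elements), and let the subgroup H of S₆ generated by the permutations (1 2 3 4 5 6) and (2 6)(3 5) act on M by conjugation. Then this action has exactly 5 orbits, of sizes 1, 2, 3, 3 and 6. -/
import Mathlib

set_option maxRecDepth 100000

/-- The set of fixed-point-free involutions of `{1,…,6}` (realized on `Fin 6`). -/
def FPFInv : Set (Equiv.Perm (Fin 6)) := {σ | σ * σ = 1 ∧ ∀ i, σ i ≠ i}

/-- The subgroup of `S₆` generated by `(1 2 3 4 5 6)` and `(2 6)(3 5)`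
(zero-indexed on `Fin 6`). -/
def H15 : Subgroup (Equiv.Perm (Fin 6)) :=
  Subgroup.closure
    {Equiv.swap 0 1 * Equiv.swap 1 2 * Equiv.swap 2 3 * Equiv.swap 3 4 * Equiv.swap 4 5,
     Equiv.swap 1 5 * Equiv.swap 2 4}

/-- The orbits of the conjugation action of `H15` on `FPFInv`. -/
def Orbits15 : Set (Set (Equiv.Perm (Fin 6))) :=
  (fun σ => {τ | ∃ g ∈ H15, g * σ * g⁻¹ = τ}) '' FPFInv

def m1 : Equiv.Perm (Fin 6) := Equiv.swap 0 1 * Equiv.swap 2 3 * Equiv.swap 4 5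
def m2 : Equiv.Perm (Fin 6) := Equiv.swap 0 1 * Equiv.swap 2 4 * Equiv.swap 3 5
def m3 : Equiv.Perm (Fin 6) := Equiv.swap 0 1 * Equiv.swap 2 5 * Equiv.swap 3 4
def m4 : Equiv.Perm (Fin 6) := Equiv.swap 0 2 * Equiv.swap 1 3 * Equiv.swap 4 5
def m5 : Equiv.Perm (Fin 6) := Equiv.swap 0 2 * Equiv.swap 1 4 * Equiv.swap 3 5
def m6 : Equiv.Perm (Fin 6) := Equiv.swap 0 2 * Equiv.swap 1 5 * Equiv.swap 3 4
def m7 : Equiv.Perm (Fin 6) := Equiv.swap 0 3 * Equiv.swap 1 2 * Equiv.swap 4 5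
def m8 : Equiv.Perm (Fin 6) := Equiv.swap 0 3 * Equiv.swap 1 4 * Equiv.swap 2 5
def m9 : Equiv.Perm (Fin 6) := Equiv.swap 0 3 * Equiv.swap 1 5 * Equiv.swap 2 4
def m10 : Equiv.Perm (Fin 6) := Equiv.swap 0 4 * Equiv.swap 1 2 * Equiv.swap 3 5
def m11 : Equiv.Perm (Fin 6) := Equiv.swap 0 4 * Equiv.swap 1 3 * Equiv.swap 2 5
def m12 : Equiv.Perm (Fin 6) := Equiv.swap 0 4 * Equiv.swap 1 5 * Equiv.swap 2 3
def m13 : Equiv.Perm (Fin 6) := Equiv.swap 0 5 * Equiv.swap 1 2 * Equiv.swap 3 4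
def m14 : Equiv.Perm (Fin 6) := Equiv.swap 0 5 * Equiv.swap 1 3 * Equiv.swap 2 4
def m15 : Equiv.Perm (Fin 6) := Equiv.swap 0 5 * Equiv.swap 1 4 * Equiv.swap 2 3
def rr : Equiv.Perm (Fin 6) := Equiv.swap 0 1 * Equiv.swap 1 2 * Equiv.swap 2 3 * Equiv.swap 3 4 * Equiv.swap 4 5
def ss : Equiv.Perm (Fin 6) := Equiv.swap 1 5 * Equiv.swap 2 4
def DL : List (Equiv.Perm (Fin 6)) := [1, rr, rr^2, rr^3, rr^4, rr^5, ss, rr*ss, rr^2*ss, rr^3*ss, rr^4*ss, rr^5*ss]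
def L15 : List (Equiv.Perm (Fin 6)) := [m1, m2, m3, m4, m5, m6, m7, m8, m9, m10, m11, m12, m13, m14, m15]
def K15 : List (List (Fin 6)) := [[1,0,3,2,5,4], [1,0,4,5,2,3], [1,0,5,4,3,2], [2,3,0,1,5,4], [2,4,0,5,1,3], [2,5,0,4,3,1], [3,2,1,0,5,4], [3,4,5,0,1,2], [3,5,4,0,2,1], [4,2,1,5,0,3], [4,3,5,1,0,2], [4,5,3,2,0,1], [5,2,1,4,3,0], [5,3,4,1,2,0], [5,4,3,2,1,0]]
def lstA : List (Equiv.Perm (Fin 6)) := [m8]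
def kyA : List (List (Fin 6)) := [[3,4,5,0,1,2]]
def OA : Set (Equiv.Perm (Fin 6)) := {x | x ∈ lstA}
def lstB : List (Equiv.Perm (Fin 6)) := [m1, m13]
def kyB : List (List (Fin 6)) := [[1,0,3,2,5,4], [5,2,1,4,3,0]]
def OB : Set (Equiv.Perm (Fin 6)) := {x | x ∈ lstB}
def lstC : List (Equiv.Perm (Fin 6)) := [m3, m7, m15]
def kyC : List (List (Fin 6)) := [[1,0,5,4,3,2], [3,2,1,0,5,4], [5,4,3,2,1,0]]
def OC : Set (Equiv.Perm (Fin 6)) := {x | x ∈ lstC}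
def lstD : List (Equiv.Perm (Fin 6)) := [m5, m9, m11]
def kyD : List (List (Fin 6)) := [[2,4,0,5,1,3], [3,5,4,0,2,1], [4,3,5,1,0,2]]
def OD : Set (Equiv.Perm (Fin 6)) := {x | x ∈ lstD}
def lstE : List (Equiv.Perm (Fin 6)) := [m2, m4, m6, m10, m12, m14]
def kyE : List (List (Fin 6)) := [[1,0,4,5,2,3], [2,3,0,1,5,4], [2,5,0,4,3,1], [4,2,1,5,0,3], [4,5,3,2,0,1], [5,3,4,1,2,0]]
def OE : Set (Equiv.Perm (Fin 6)) := {x | x ∈ lstE}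

def pkey (σ : Equiv.Perm (Fin 6)) : List (Fin 6) := [σ 0, σ 1, σ 2, σ 3, σ 4, σ 5]

lemma pkey_inj (a b : Equiv.Perm (Fin 6)) (h : pkey a = pkey b) : a = b := by
  simp only [pkey, List.cons.injEq, and_true] at h
  obtain ⟨h0, h1, h2, h3, h4, h5⟩ := h
  apply Equiv.ext
  intro i
  match i with
  | 0 => exact h0
  | 1 => exact h1
  | 2 => exact h2
  | 3 => exact h3
  | 4 => exact h4
  | 5 => exact h5

lemma mem_of_pkey_mem (Lst : List (Equiv.Perm (Fin 6))) (K : List (List (Fin 6)))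
    (hLK : Lst.map pkey = K) (τ : Equiv.Perm (Fin 6)) (hk : pkey τ ∈ K) : τ ∈ Lst := by
  subst hLK
  obtain ⟨e, he, hk⟩ := List.mem_map.1 hk
  obtain rfl := pkey_inj e τ hk
  exact he

lemma hH : H15 = Subgroup.closure {rr, ss} := rfl

lemma hrr : rr ∈ H15 := by
  rw [hH]; exact Subgroup.subset_closure (Set.mem_insert _ _)

lemma hss : ss ∈ H15 := by
  rw [hH]; exact Subgroup.subset_closure (Set.mem_insert_of_mem _ rfl)

lemma hss2 : ss * ss = 1 := by decide

lemma hssinv : ss⁻¹ = ss := inv_eq_of_mul_eq_one_right hss2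

lemma hsrs : ss * rr * ss⁻¹ = rr⁻¹ := by decide

lemma s_zpow (k : ℤ) : ss * rr ^ k * ss⁻¹ = rr ^ (-k) := by
  calc ss * rr ^ k * ss⁻¹ = (MulAut.conj ss) (rr ^ k) := by simp [MulAut.conj_apply]
    _ = ((MulAut.conj ss) rr) ^ k := map_zpow _ _ _
    _ = (rr⁻¹) ^ k := by rw [show (MulAut.conj ss) rr = rr⁻¹ from hsrs]
    _ = rr ^ (-k) := by rw [inv_zpow, zpow_neg]

lemma sr_comm (k : ℤ) : ss * rr ^ k = rr ^ (-k) * ss := by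
  have h := s_zpow k
  calc ss * rr ^ k = (ss * rr ^ k * ss⁻¹) * ss := by group
    _ = rr ^ (-k) * ss := by rw [h]

lemma H15_cases {g : Equiv.Perm (Fin 6)} (hg : g ∈ H15) :
    (∃ k : ℤ, g = rr ^ k) ∨ (∃ k : ℤ, g = rr ^ k * ss) := by
  rw [hH] at hg
  refine Subgroup.closure_induction ?_ ?_ ?_ ?_ hg
  · intro x hx
    simp only [Set.mem_insert_iff, Set.mem_singleton_iff] at hx
    rcases hx with rfl | rfl
    · exact Or.inl ⟨1, (zpow_one rr).symm⟩
    · exact Or.inr ⟨0, by rw [zpow_zero, one_mul]⟩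
  · exact Or.inl ⟨0, (zpow_zero rr).symm⟩
  · rintro x y _ _ (⟨k, rfl⟩ | ⟨k, rfl⟩) (⟨l, rfl⟩ | ⟨l, rfl⟩)
    · exact Or.inl ⟨k + l, (zpow_add rr k l).symm⟩
    · exact Or.inr ⟨k + l, by rw [← mul_assoc, ← zpow_add]⟩
    · refine Or.inr ⟨k - l, ?_⟩
      rw [mul_assoc, sr_comm l, ← mul_assoc, ← zpow_add, ← sub_eq_add_neg]
    · refine Or.inl ⟨k - l, ?_⟩
      have h : rr ^ k * ss * (rr ^ l * ss) = rr ^ k * (ss * rr ^ l) * ss := by group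
      rw [h, sr_comm l, ← mul_assoc, ← zpow_add, mul_assoc, hss2, mul_one, ← sub_eq_add_neg]
  · rintro x _ (⟨k, rfl⟩ | ⟨k, rfl⟩)
    · exact Or.inl ⟨-k, (zpow_neg rr k).symm⟩
    · refine Or.inr ⟨k, ?_⟩
      rw [mul_inv_rev, hssinv, ← zpow_neg, sr_comm, neg_neg]

lemma rr_zpow_reduce (k : ℤ) : ∃ m : ℕ, m < 6 ∧ rr ^ k = rr ^ m := by
  have h6 : rr ^ (6 : ℤ) = 1 := by
    have h : rr ^ (6 : ℕ) = 1 := by decide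
    rw [← zpow_natCast] at h; exact_mod_cast h
  have h1 : 0 ≤ k % 6 := Int.emod_nonneg k (by norm_num)
  have h2 : k % 6 < 6 := Int.emod_lt_of_pos k (by norm_num)
  refine ⟨(k % 6).toNat, by omega, ?_⟩
  conv_lhs => rw [← Int.mul_ediv_add_emod k 6]
  rw [zpow_add, zpow_mul, h6, one_zpow, one_mul, ← zpow_natCast]
  congr 1
  omega

lemma mem_H15 (g : Equiv.Perm (Fin 6)) : g ∈ H15 ↔ g ∈ DL := by
  constructor
  · intro hg
    rcases H15_cases hg with ⟨k, rfl⟩ | ⟨k, rfl⟩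
    · obtain ⟨m, hm, he⟩ := rr_zpow_reduce k
      rw [he]
      interval_cases m <;> decide
    · obtain ⟨m, hm, he⟩ := rr_zpow_reduce k
      rw [he]
      interval_cases m <;> decide
  · intro hg
    simp only [DL, List.mem_cons, List.not_mem_nil, or_false] at hg
    rcases hg with rfl | rfl | rfl | rfl | rfl | rfl | rfl | rfl | rfl | rfl | rfl | rfl
    exacts [one_mem _, hrr, pow_mem hrr 2, pow_mem hrr 3, pow_mem hrr 4, pow_mem hrr 5, hss,
      mul_mem hrr hss, mul_mem (pow_mem hrr 2) hss, mul_mem (pow_mem hrr 3) hss,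
      mul_mem (pow_mem hrr 4) hss, mul_mem (pow_mem hrr 5) hss]

def orb (σ : Equiv.Perm (Fin 6)) : Set (Equiv.Perm (Fin 6)) := {τ | ∃ g ∈ H15, g * σ * g⁻¹ = τ}

lemma orbits_eq : Orbits15 = orb '' FPFInv := rfl

lemma orb_eq_of_mem {σ τ : Equiv.Perm (Fin 6)} (h : τ ∈ orb σ) : orb τ = orb σ := by
  obtain ⟨g, hg, rfl⟩ := h
  ext x
  constructor
  · rintro ⟨h', hh, rfl⟩
    exact ⟨h' * g, mul_mem hh hg, by group⟩
  · rintro ⟨h', hh, rfl⟩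
    exact ⟨h' * g⁻¹, mul_mem hh (inv_mem hg), by group⟩

lemma fpf_aux : ∀ σ : Equiv.Perm (Fin 6), ((∀ i, σ (σ i) = i) ∧ ∀ i, σ i ≠ i) →
    pkey σ ∈ K15 := by decide

lemma hL15k : L15.map pkey = K15 := by decide

lemma hFPF : FPFInv = {x | x ∈ L15} := by
  apply Set.eq_of_subset_of_subset
  · rintro σ ⟨h1, h2⟩
    have hi : ∀ i, σ (σ i) = i := fun i => by
      simpa using Equiv.ext_iff.1 h1 i
    exact mem_of_pkey_mem L15 K15 hL15k σ (fpf_aux σ ⟨hi, h2⟩)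
  · intro σ hσ
    have hall : ∀ σ ∈ L15, σ * σ = 1 ∧ ∀ i, σ i ≠ i := by decide
    exact hall σ hσ


lemma hLAk : lstA.map pkey = kyA := by decide

lemma conjA : ∀ g ∈ DL, pkey (g * m8 * g⁻¹) ∈ kyA := by
  intro g hg
  simp only [DL, List.mem_cons, List.not_mem_nil, or_false] at hg
  rcases hg with rfl | rfl | rfl | rfl | rfl | rfl | rfl | rfl | rfl | rfl | rfl | rfl <;> decide

lemma orbA : orb m8 = OA := by
  apply Set.eq_of_subset_of_subset
  · rintro τ ⟨g, hg, rfl⟩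
    exact mem_of_pkey_mem lstA kyA hLAk _ (conjA g ((mem_H15 g).1 hg))
  · intro x hx
    simp only [OA, lstA, Set.mem_setOf_eq, List.mem_cons, List.not_mem_nil, or_false] at hx
    rcases hx with rfl
    · exact ⟨1, (mem_H15 _).2 (by decide), pkey_inj _ _ (by decide)⟩

lemma hLBk : lstB.map pkey = kyB := by decide

lemma conjB : ∀ g ∈ DL, pkey (g * m1 * g⁻¹) ∈ kyB := by
  intro g hg
  simp only [DL, List.mem_cons, List.not_mem_nil, or_false] at hg
  rcases hg with rfl | rfl | rfl | rfl | rfl | rfl | rfl | rfl | rfl | rfl | rfl | rfl <;> decide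

lemma orbB : orb m1 = OB := by
  apply Set.eq_of_subset_of_subset
  · rintro τ ⟨g, hg, rfl⟩
    exact mem_of_pkey_mem lstB kyB hLBk _ (conjB g ((mem_H15 g).1 hg))
  · intro x hx
    simp only [OB, lstB, Set.mem_setOf_eq, List.mem_cons, List.not_mem_nil, or_false] at hx
    rcases hx with rfl | rfl
    · exact ⟨1, (mem_H15 _).2 (by decide), pkey_inj _ _ (by decide)⟩
    · exact ⟨rr, (mem_H15 _).2 (by decide), pkey_inj _ _ (by decide)⟩

lemma hLCk : lstC.map pkey = kyC := by decide

lemma conjC : ∀ g ∈ DL, pkey (g * m3 * g⁻¹) ∈ kyC := by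
  intro g hg
  simp only [DL, List.mem_cons, List.not_mem_nil, or_false] at hg
  rcases hg with rfl | rfl | rfl | rfl | rfl | rfl | rfl | rfl | rfl | rfl | rfl | rfl <;> decide

lemma orbC : orb m3 = OC := by
  apply Set.eq_of_subset_of_subset
  · rintro τ ⟨g, hg, rfl⟩
    exact mem_of_pkey_mem lstC kyC hLCk _ (conjC g ((mem_H15 g).1 hg))
  · intro x hx
    simp only [OC, lstC, Set.mem_setOf_eq, List.mem_cons, List.not_mem_nil, or_false] at hx
    rcases hx with rfl | rfl | rfl
    · exact ⟨1, (mem_H15 _).2 (by decide), pkey_inj _ _ (by decide)⟩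
    · exact ⟨rr, (mem_H15 _).2 (by decide), pkey_inj _ _ (by decide)⟩
    · exact ⟨rr^2, (mem_H15 _).2 (by decide), pkey_inj _ _ (by decide)⟩

lemma hLDk : lstD.map pkey = kyD := by decide

lemma conjD : ∀ g ∈ DL, pkey (g * m5 * g⁻¹) ∈ kyD := by
  intro g hg
  simp only [DL, List.mem_cons, List.not_mem_nil, or_false] at hg
  rcases hg with rfl | rfl | rfl | rfl | rfl | rfl | rfl | rfl | rfl | rfl | rfl | rfl <;> decide

lemma orbD : orb m5 = OD := by
  apply Set.eq_of_subset_of_subset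
  · rintro τ ⟨g, hg, rfl⟩
    exact mem_of_pkey_mem lstD kyD hLDk _ (conjD g ((mem_H15 g).1 hg))
  · intro x hx
    simp only [OD, lstD, Set.mem_setOf_eq, List.mem_cons, List.not_mem_nil, or_false] at hx
    rcases hx with rfl | rfl | rfl
    · exact ⟨1, (mem_H15 _).2 (by decide), pkey_inj _ _ (by decide)⟩
    · exact ⟨rr^2, (mem_H15 _).2 (by decide), pkey_inj _ _ (by decide)⟩
    · exact ⟨rr, (mem_H15 _).2 (by decide), pkey_inj _ _ (by decide)⟩

lemma hLEk : lstE.map pkey = kyE := by decide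

lemma conjE : ∀ g ∈ DL, pkey (g * m2 * g⁻¹) ∈ kyE := by
  intro g hg
  simp only [DL, List.mem_cons, List.not_mem_nil, or_false] at hg
  rcases hg with rfl | rfl | rfl | rfl | rfl | rfl | rfl | rfl | rfl | rfl | rfl | rfl <;> decide

lemma orbE : orb m2 = OE := by
  apply Set.eq_of_subset_of_subset
  · rintro τ ⟨g, hg, rfl⟩
    exact mem_of_pkey_mem lstE kyE hLEk _ (conjE g ((mem_H15 g).1 hg))
  · intro x hx
    simp only [OE, lstE, Set.mem_setOf_eq, List.mem_cons, List.not_mem_nil, or_false] at hx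
    rcases hx with rfl | rfl | rfl | rfl | rfl | rfl
    · exact ⟨1, (mem_H15 _).2 (by decide), pkey_inj _ _ (by decide)⟩
    · exact ⟨rr^4, (mem_H15 _).2 (by decide), pkey_inj _ _ (by decide)⟩
    · exact ⟨rr^3, (mem_H15 _).2 (by decide), pkey_inj _ _ (by decide)⟩
    · exact ⟨rr, (mem_H15 _).2 (by decide), pkey_inj _ _ (by decide)⟩
    · exact ⟨rr^2, (mem_H15 _).2 (by decide), pkey_inj _ _ (by decide)⟩
    · exact ⟨rr^5, (mem_H15 _).2 (by decide), pkey_inj _ _ (by decide)⟩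

lemma horbits : Orbits15 = {OA, OB, OC, OD, OE} := by
  rw [orbits_eq, hFPF]
  apply Set.eq_of_subset_of_subset
  · rintro S ⟨σ, hσ, rfl⟩
    simp only [Set.mem_setOf_eq, L15, List.mem_cons, List.not_mem_nil, or_false] at hσ
    rcases hσ with rfl | rfl | rfl | rfl | rfl | rfl | rfl | rfl | rfl | rfl | rfl | rfl | rfl | rfl | rfl
    · have hm : m1 ∈ orb m1 := by rw [orbB]; simp [OB, lstB]
      rw [(orb_eq_of_mem hm).trans orbB]
      simp [Set.mem_insert_iff]
    · have hm : m2 ∈ orb m2 := by rw [orbE]; simp [OE, lstE]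
      rw [(orb_eq_of_mem hm).trans orbE]
      simp [Set.mem_insert_iff]
    · have hm : m3 ∈ orb m3 := by rw [orbC]; simp [OC, lstC]
      rw [(orb_eq_of_mem hm).trans orbC]
      simp [Set.mem_insert_iff]
    · have hm : m4 ∈ orb m2 := by rw [orbE]; simp [OE, lstE]
      rw [(orb_eq_of_mem hm).trans orbE]
      simp [Set.mem_insert_iff]
    · have hm : m5 ∈ orb m5 := by rw [orbD]; simp [OD, lstD]
      rw [(orb_eq_of_mem hm).trans orbD]
      simp [Set.mem_insert_iff]
    · have hm : m6 ∈ orb m2 := by rw [orbE]; simp [OE, lstE]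
      rw [(orb_eq_of_mem hm).trans orbE]
      simp [Set.mem_insert_iff]
    · have hm : m7 ∈ orb m3 := by rw [orbC]; simp [OC, lstC]
      rw [(orb_eq_of_mem hm).trans orbC]
      simp [Set.mem_insert_iff]
    · have hm : m8 ∈ orb m8 := by rw [orbA]; simp [OA, lstA]
      rw [(orb_eq_of_mem hm).trans orbA]
      simp [Set.mem_insert_iff]
    · have hm : m9 ∈ orb m5 := by rw [orbD]; simp [OD, lstD]
      rw [(orb_eq_of_mem hm).trans orbD]
      simp [Set.mem_insert_iff]
    · have hm : m10 ∈ orb m2 := by rw [orbE]; simp [OE, lstE]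
      rw [(orb_eq_of_mem hm).trans orbE]
      simp [Set.mem_insert_iff]
    · have hm : m11 ∈ orb m5 := by rw [orbD]; simp [OD, lstD]
      rw [(orb_eq_of_mem hm).trans orbD]
      simp [Set.mem_insert_iff]
    · have hm : m12 ∈ orb m2 := by rw [orbE]; simp [OE, lstE]
      rw [(orb_eq_of_mem hm).trans orbE]
      simp [Set.mem_insert_iff]
    · have hm : m13 ∈ orb m1 := by rw [orbB]; simp [OB, lstB]
      rw [(orb_eq_of_mem hm).trans orbB]
      simp [Set.mem_insert_iff]
    · have hm : m14 ∈ orb m2 := by rw [orbE]; simp [OE, lstE]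
      rw [(orb_eq_of_mem hm).trans orbE]
      simp [Set.mem_insert_iff]
    · have hm : m15 ∈ orb m3 := by rw [orbC]; simp [OC, lstC]
      rw [(orb_eq_of_mem hm).trans orbC]
      simp [Set.mem_insert_iff]
  · intro S hS
    simp only [Set.mem_insert_iff, Set.mem_singleton_iff] at hS
    rcases hS with rfl | rfl | rfl | rfl | rfl
    · exact ⟨m8, by simp [Set.mem_setOf_eq, L15], orbA⟩
    · exact ⟨m1, by simp [Set.mem_setOf_eq, L15], orbB⟩
    · exact ⟨m3, by simp [Set.mem_setOf_eq, L15], orbC⟩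
    · exact ⟨m5, by simp [Set.mem_setOf_eq, L15], orbD⟩
    · exact ⟨m2, by simp [Set.mem_setOf_eq, L15], orbE⟩

lemma cardA : OA.ncard = 1 := by
  have hnd : lstA.Nodup := List.Nodup.of_map pkey (by rw [hLAk]; decide)
  rw [show OA = ↑lstA.toFinset from by rw [List.coe_toFinset]; rfl,
    Set.ncard_coe_finset, List.toFinset_card_of_nodup hnd]
  rfl

lemma cardB : OB.ncard = 2 := by
  have hnd : lstB.Nodup := List.Nodup.of_map pkey (by rw [hLBk]; decide)
  rw [show OB = ↑lstB.toFinset from by rw [List.coe_toFinset]; rfl,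
    Set.ncard_coe_finset, List.toFinset_card_of_nodup hnd]
  rfl

lemma cardC : OC.ncard = 3 := by
  have hnd : lstC.Nodup := List.Nodup.of_map pkey (by rw [hLCk]; decide)
  rw [show OC = ↑lstC.toFinset from by rw [List.coe_toFinset]; rfl,
    Set.ncard_coe_finset, List.toFinset_card_of_nodup hnd]
  rfl

lemma cardD : OD.ncard = 3 := by
  have hnd : lstD.Nodup := List.Nodup.of_map pkey (by rw [hLDk]; decide)
  rw [show OD = ↑lstD.toFinset from by rw [List.coe_toFinset]; rfl,
    Set.ncard_coe_finset, List.toFinset_card_of_nodup hnd]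
  rfl

lemma cardE : OE.ncard = 6 := by
  have hnd : lstE.Nodup := List.Nodup.of_map pkey (by rw [hLEk]; decide)
  rw [show OE = ↑lstE.toFinset from by rw [List.coe_toFinset]; rfl,
    Set.ncard_coe_finset, List.toFinset_card_of_nodup hnd]
  rfl

lemma neAB : OA ≠ OB := fun h => by
  have h1 := cardA
  rw [h, cardB] at h1
  exact absurd h1 (by norm_num)

lemma neAC : OA ≠ OC := fun h => by
  have h1 := cardA
  rw [h, cardC] at h1
  exact absurd h1 (by norm_num)

lemma neAD : OA ≠ OD := fun h => by
  have h1 := cardA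
  rw [h, cardD] at h1
  exact absurd h1 (by norm_num)

lemma neAE : OA ≠ OE := fun h => by
  have h1 := cardA
  rw [h, cardE] at h1
  exact absurd h1 (by norm_num)

lemma neBC : OB ≠ OC := fun h => by
  have h1 := cardB
  rw [h, cardC] at h1
  exact absurd h1 (by norm_num)

lemma neBD : OB ≠ OD := fun h => by
  have h1 := cardB
  rw [h, cardD] at h1
  exact absurd h1 (by norm_num)

lemma neBE : OB ≠ OE := fun h => by
  have h1 := cardB
  rw [h, cardE] at h1
  exact absurd h1 (by norm_num)

lemma neCE : OC ≠ OE := fun h => by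
  have h1 := cardC
  rw [h, cardE] at h1
  exact absurd h1 (by norm_num)

lemma neDE : OD ≠ OE := fun h => by
  have h1 := cardD
  rw [h, cardE] at h1
  exact absurd h1 (by norm_num)

lemma hm3C : m3 ∈ OC := by simp [OC, lstC]

lemma hm3D : m3 ∉ OD := by
  simp only [OD, lstD, Set.mem_setOf_eq, List.mem_cons, List.not_mem_nil, or_false]
  push_neg
  refine ⟨?_, ?_, ?_⟩ <;> (intro h; exact absurd (congrArg pkey h) (by decide))

lemma neCD : OC ≠ OD := fun h => hm3D (h ▸ hm3C)

lemma card15 : FPFInv.ncard = 15 := by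
  have hnd : L15.Nodup := List.Nodup.of_map pkey (by rw [hL15k]; decide)
  rw [hFPF, show {x | x ∈ L15} = ↑L15.toFinset from (List.coe_toFinset L15).symm,
    Set.ncard_coe_finset, List.toFinset_card_of_nodup hnd]
  rfl

lemma filt1 : {S ∈ Orbits15 | S.ncard = 1} = ({OA} : Set (Set (Equiv.Perm (Fin 6)))) := by
  rw [horbits]
  ext S
  simp only [Set.mem_setOf_eq, Set.mem_insert_iff, Set.mem_singleton_iff]
  constructor
  · rintro ⟨rfl | rfl | rfl | rfl | rfl, hc⟩
    · rfl
    · rw [cardB] at hc; exact absurd hc (by norm_num)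
    · rw [cardC] at hc; exact absurd hc (by norm_num)
    · rw [cardD] at hc; exact absurd hc (by norm_num)
    · rw [cardE] at hc; exact absurd hc (by norm_num)
  · rintro rfl
    exact ⟨Or.inl rfl, cardA⟩

lemma filt2 : {S ∈ Orbits15 | S.ncard = 2} = ({OB} : Set (Set (Equiv.Perm (Fin 6)))) := by
  rw [horbits]
  ext S
  simp only [Set.mem_setOf_eq, Set.mem_insert_iff, Set.mem_singleton_iff]
  constructor
  · rintro ⟨rfl | rfl | rfl | rfl | rfl, hc⟩
    · rw [cardA] at hc; exact absurd hc (by norm_num)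
    · rfl
    · rw [cardC] at hc; exact absurd hc (by norm_num)
    · rw [cardD] at hc; exact absurd hc (by norm_num)
    · rw [cardE] at hc; exact absurd hc (by norm_num)
  · rintro rfl
    exact ⟨Or.inr (Or.inl rfl), cardB⟩

lemma filt3 : {S ∈ Orbits15 | S.ncard = 3} = ({OC, OD} : Set (Set (Equiv.Perm (Fin 6)))) := by
  rw [horbits]
  ext S
  simp only [Set.mem_setOf_eq, Set.mem_insert_iff, Set.mem_singleton_iff]
  constructor
  · rintro ⟨rfl | rfl | rfl | rfl | rfl, hc⟩
    · rw [cardA] at hc; exact absurd hc (by norm_num)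
    · rw [cardB] at hc; exact absurd hc (by norm_num)
    · exact Or.inl rfl
    · exact Or.inr rfl
    · rw [cardE] at hc; exact absurd hc (by norm_num)
  · rintro (rfl | rfl)
    · exact ⟨Or.inr (Or.inr (Or.inl rfl)), cardC⟩
    · exact ⟨Or.inr (Or.inr (Or.inr (Or.inl rfl))), cardD⟩

lemma filt6 : {S ∈ Orbits15 | S.ncard = 6} = ({OE} : Set (Set (Equiv.Perm (Fin 6)))) := by
  rw [horbits]
  ext S
  simp only [Set.mem_setOf_eq, Set.mem_insert_iff, Set.mem_singleton_iff]
  constructor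
  · rintro ⟨rfl | rfl | rfl | rfl | rfl, hc⟩
    · rw [cardA] at hc; exact absurd hc (by norm_num)
    · rw [cardB] at hc; exact absurd hc (by norm_num)
    · rw [cardC] at hc; exact absurd hc (by norm_num)
    · rw [cardD] at hc; exact absurd hc (by norm_num)
    · rfl
  · rintro rfl
    exact ⟨Or.inr (Or.inr (Or.inr (Or.inr rfl))), cardE⟩

theorem stmt15 :
    FPFInv.ncard = 15 ∧
    Orbits15.ncard = 5 ∧
    {S ∈ Orbits15 | S.ncard = 1}.ncard = 1 ∧
    {S ∈ Orbits15 | S.ncard = 2}.ncard = 1 ∧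
    {S ∈ Orbits15 | S.ncard = 3}.ncard = 2 ∧
    {S ∈ Orbits15 | S.ncard = 6}.ncard = 1 := by
  refine ⟨card15, ?_, ?_, ?_, ?_, ?_⟩
  · rw [horbits]
    have h1 : OA ∉ ({OB, OC, OD, OE} : Set (Set (Equiv.Perm (Fin 6)))) := by
      simp only [Set.mem_insert_iff, Set.mem_singleton_iff]
      push_neg
      exact ⟨neAB, neAC, neAD, neAE⟩
    have h2 : OB ∉ ({OC, OD, OE} : Set (Set (Equiv.Perm (Fin 6)))) := by
      simp only [Set.mem_insert_iff, Set.mem_singleton_iff]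
      push_neg
      exact ⟨neBC, neBD, neBE⟩
    have h3 : OC ∉ ({OD, OE} : Set (Set (Equiv.Perm (Fin 6)))) := by
      simp only [Set.mem_insert_iff, Set.mem_singleton_iff]
      push_neg
      exact ⟨neCD, neCE⟩
    rw [Set.ncard_insert_of_notMem h1, Set.ncard_insert_of_notMem h2,
      Set.ncard_insert_of_notMem h3, Set.ncard_pair neDE]
  · rw [filt1, Set.ncard_singleton]
  · rw [filt2, Set.ncard_singleton]
  · rw [filt3, Set.ncard_pair neCD]
  · rw [filt6, Set.ncard_singleton]
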